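/- Let S be a set of substitutions on a finite alphabet A and s a sequence in S^ω. Every element of GenStabFin(s) belongs to StabUltLet(s); that is, every indecomposable finite word indefinitely desubstitutable along s can be written f(α) where s = f·s' with f a finite prefix of s (composed), s' the corresponding suffix, and α a letter indefinitely desubstitutable along s'. -/

import Mathlib

universe u
variable {A : Type u}

/-- Apply a substitution (given by images of letters) to a finite word. -/
def applyList (f : A → List A) (u : List A) : List A := u.flatMap f

/-- Starting position of the image of the `n`-th letter of `v` inside `f(v)`. -/
def blockStart (f : A → List A) (v : ℕ → A) : ℕ → ℕ
  | 0 => 0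
  | n + 1 => blockStart f v n + (f (v n)).length

/-- `ApplyEq f v u` means `u = f(v)` for right-infinite words. -/
def ApplyEq (f : A → List A) (v u : ℕ → A) : Prop :=
  ∀ (n i : ℕ) (h : i < (f (v n)).length),
    u (blockStart f v n + i) = (f (v n))[i]

/-- `u` occurs as a factor of `w` at position `k`. -/
def FactorAt (w : ℕ → A) (u : List A) (k : ℕ) : Prop :=
  ∀ (i : ℕ) (h : i < u.length), u[i] = w (k + i)

def Factor (w : ℕ → A) (u : List A) : Prop := ∃ k, FactorAt w u k

/-- `u` is a prefix of the infinite word `w`. -/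
def PrefixOf (u : List A) (w : ℕ → A) : Prop :=
  ∀ (i : ℕ) (h : i < u.length), u[i] = w i

/-- Membership in the stable set of a set `S` of substitutions. -/
def InStable (S : Set (A → List A)) (w : ℕ → A) : Prop :=
  ∃ (σ : ℕ → A → List A) (ws : ℕ → ℕ → A),
    (∀ n, σ n ∈ S) ∧ ws 0 = w ∧ ∀ n, ApplyEq (σ n) (ws (n + 1)) (ws n)

/-- Composition `σ_1 ∘ ⋯ ∘ σ_n` of the first `n` substitutions of `s` (0-indexed). -/
def compSeq (s : ℕ → A → List A) : ℕ → A → List A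
  | 0 => fun a => [a]
  | n + 1 => fun a => applyList (compSeq s n) (s n a)

/-- `w` is S-adic with directive sequence `σ`. -/
def SAdicWith (σ : ℕ → A → List A) (w : ℕ → A) : Prop :=
  ∃ a : ℕ → A, (∀ n, PrefixOf (compSeq σ n (a n)) w) ∧
    ∀ N : ℕ, ∃ n, N ≤ (compSeq σ n (a n)).length


/-- Finite nonempty words indefinitely desubstitutable with directive sequence `s`. -/
def StabFin (s : ℕ → A → List A) : Set (List A) :=
  {u | ∃ us : ℕ → List A, us 0 = u ∧ (∀ n, us n ≠ []) ∧
    ∀ n, us n = applyList (s n) (us (n + 1))}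

/-- Nonempty concatenations of elements of `X`. -/
def WPlus (X : Set (List A)) : Set (List A) :=
  {u | ∃ L : List (List A), L ≠ [] ∧ (∀ x ∈ L, x ∈ X) ∧ u = L.flatten}

/-- Elements of `StabFin s` that are not concatenations of two or more
elements of `StabFin s`. -/
def GenStabFin (s : ℕ → A → List A) : Set (List A) :=
  StabFin s \ {u | ∃ x y, x ∈ StabFin s ∧ y ∈ WPlus (StabFin s) ∧ u = x ++ y}

/-- Letters indefinitely desubstitutable along `s`. -/
def StabLet (s : ℕ → A → List A) : Set A :=
  {α | ∃ as : ℕ → A, as 0 = α ∧ ∀ n, s n (as (n + 1)) = [as n]}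

/-- Words of the form `σ_1⋯σ_k(α)` with `α` indefinitely desubstitutable along the
remaining suffix of `s`. -/
def StabUltLet (s : ℕ → A → List A) : Set (List A) :=
  {u | ∃ (k : ℕ) (α : A), α ∈ StabLet (fun n => s (n + k)) ∧ u = compSeq s k α}


namespace Stmt7Aux

variable {A : Type u}

lemma applyList_cons (f : A → List A) (a : A) (t : List A) :
    applyList f (a :: t) = f a ++ applyList f t := List.flatMap_cons ..

lemma applyList_singleton (f : A → List A) (a : A) : applyList f [a] = f a := by
  simp [applyList]

lemma applyList_id (u : List A) : applyList (fun a => [a]) u = u := by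
  simp [applyList]

lemma applyList_comp (f g : A → List A) (u : List A) :
    applyList f (applyList g u) = applyList (fun a => applyList f (g a)) u := by
  simp [applyList, List.flatMap_assoc]

lemma length_le_applyList (f : A → List A) (hf : ∀ a, f a ≠ []) (u : List A) :
    u.length ≤ (applyList f u).length := by
  induction u with
  | nil => simp [applyList]
  | cons a t ih =>
    rw [applyList_cons, List.length_append]
    have := List.length_pos_iff.mpr (hf a)
    simp only [List.length_cons]
    omega

lemma applyList_ne_nil (f : A → List A) (hf : ∀ a, f a ≠ []) {u : List A} (hu : u ≠ []) :
    applyList f u ≠ [] := by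
  have h1 : 0 < u.length := List.length_pos_iff.mpr hu
  have := length_le_applyList f hf u
  exact List.ne_nil_of_length_pos (by omega)

lemma singletons_of_length_le (f : A → List A) (hf : ∀ a, f a ≠ [])
    {u : List A} (h : (applyList f u).length ≤ u.length) :
    ∀ a ∈ u, f a = [(f a).head (hf a)] := by
  induction u with
  | nil => simp
  | cons a t ih =>
    rw [applyList_cons, List.length_append] at h
    have h1 : 0 < (f a).length := List.length_pos_iff.mpr (hf a)
    have h2 := length_le_applyList f hf t
    simp only [List.length_cons] at h
    intro b hb
    rcases List.mem_cons.mp hb with rfl | hb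
    · have hfa : (f b).length = 1 := by omega
      have key : ∀ (l : List A) (hl : l ≠ []), l.length = 1 → l = [l.head hl] := by
        intro l hl hlen
        cases l with
        | nil => simp at hl
        | cons x xs => simp at hlen; simp [hlen]
      exact key _ (hf b) hfa
    · exact ih (by omega) b hb

lemma applyList_eq_map (f : A → List A) (g : A → A) {u : List A}
    (h : ∀ a ∈ u, f a = [g a]) : applyList f u = u.map g := by
  induction u with
  | nil => rfl
  | cons a t ih =>
    rw [applyList_cons, h a (by simp), ih (fun b hb => h b (by simp [hb]))]
    rfl

lemma compSeq_ne_nil (s : ℕ → A → List A) (hf : ∀ n a, s n a ≠ []) :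
    ∀ (k : ℕ) (a : A), compSeq s k a ≠ [] := by
  intro k
  induction k with
  | zero => intro a; simp [compSeq]
  | succ k ih =>
    intro a
    show applyList (compSeq s k) (s k a) ≠ []
    exact applyList_ne_nil _ ih (hf k a)

lemma compSeq_shift (s : ℕ → A → List A) (n : ℕ) :
    ∀ (j : ℕ) (a : A),
      compSeq (fun m => s (m + n)) (j + 1) a
        = applyList (s n) (compSeq (fun m => s (m + (n + 1))) j a) := by
  intro j
  induction j with
  | zero =>
    intro a
    show applyList (compSeq (fun m => s (m + n)) 0) (s (0 + n) a) = applyList (s n) [a]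
    rw [applyList_singleton, Nat.zero_add]
    exact applyList_id _
  | succ j ih =>
    intro a
    show applyList (compSeq (fun m => s (m + n)) (j + 1)) (s ((j + 1) + n) a)
        = applyList (s n) (applyList (compSeq (fun m => s (m + (n + 1))) j) (s (j + (n + 1)) a))
    rw [applyList_comp]
    have e : (j + 1) + n = j + (n + 1) := by omega
    rw [e]
    exact congrArg (fun f => applyList f (s (j + (n + 1)) a)) (funext ih)

lemma us_zero_eq (s : ℕ → A → List A) (us : ℕ → List A)
    (hrec : ∀ n, us n = applyList (s n) (us (n + 1))) :
    ∀ k, us 0 = applyList (compSeq s k) (us k) := by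
  intro k
  induction k with
  | zero => rw [show compSeq s 0 = fun a => [a] from rfl, applyList_id]
  | succ k ih =>
    rw [ih, hrec k, applyList_comp]
    rfl

lemma compSeq_mem_stabFin (s : ℕ → A → List A) (hf : ∀ n a, s n a ≠ []) (k : ℕ) {β : A}
    (hβ : β ∈ StabLet (fun n => s (n + k))) : compSeq s k β ∈ StabFin s := by
  obtain ⟨as, has0, has⟩ := hβ
  refine ⟨fun n => compSeq (fun m => s (m + n)) (k - n) (as (n - k)), ?_, ?_, ?_⟩
  · show compSeq (fun m => s (m + 0)) (k - 0) (as (0 - k)) = compSeq s k β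
    have e : (fun m => s (m + 0)) = s := funext fun m => rfl
    rw [e, Nat.zero_sub, Nat.sub_zero, has0]
  · intro n
    exact compSeq_ne_nil _ (fun m a => hf (m + n) a) _ _
  · intro n
    show compSeq (fun m => s (m + n)) (k - n) (as (n - k))
        = applyList (s n) (compSeq (fun m => s (m + (n + 1))) (k - (n + 1)) (as (n + 1 - k)))
    rcases le_or_gt k n with h | h
    · have h1 : k - n = 0 := by omega
      have h2 : k - (n + 1) = 0 := by omega
      rw [h1, h2]
      show [as (n - k)] = applyList (s n) [as (n + 1 - k)]
      rw [applyList_singleton]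
      have hh := has (n - k)
      simp only [] at hh
      have e1 : n - k + k = n := by omega
      have e2 : n - k + 1 = n + 1 - k := by omega
      rw [e1, e2] at hh
      exact hh.symm
    · have h1 : k - n = (k - (n + 1)) + 1 := by omega
      have h2 : n - k = 0 := by omega
      have h3 : n + 1 - k = 0 := by omega
      rw [h1, h2, h3]
      exact compSeq_shift s n (k - (n + 1)) (as 0)

end Stmt7Aux

open Stmt7Aux in
/-- `GenStabFin(s) ⊆ StabUltLet(s)`. -/
theorem stmt7 {A : Type u} [Fintype A] (S : Set (A → List A))
    (hS : ∀ f ∈ S, ∀ a, f a ≠ []) (s : ℕ → A → List A) (hs : ∀ n, s n ∈ S) :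
    GenStabFin s ⊆ StabUltLet s := by
  intro u hu
  obtain ⟨⟨us, hus0, hne, hrec⟩, hgen⟩ := hu
  have hf : ∀ n a, s n a ≠ [] := fun n a => hS (s n) (hs n) a
  have hstep : ∀ n, (us (n + 1)).length ≤ (us n).length := by
    intro n; rw [hrec n]; exact length_le_applyList _ (hf n) _
  have hanti : Antitone fun n => (us n).length := antitone_nat_of_succ_le hstep
  obtain ⟨k, hk⟩ := Nat.sInf_mem
    (⟨(us 0).length, 0, rfl⟩ : (Set.range fun n => (us n).length).Nonempty)
  simp only [] at hk
  have hconst : ∀ j, (us (k + j)).length = (us k).length := by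
    intro j
    refine le_antisymm (hanti (Nat.le_add_right k j)) ?_
    rw [hk]
    exact Nat.sInf_le ⟨k + j, rfl⟩
  have hd : ∀ j, ∀ a ∈ us (k + j + 1),
      s (k + j) a = [(s (k + j) a).head (hf (k + j) a)] := by
    intro j
    apply singletons_of_length_le _ (hf (k + j))
    rw [← hrec (k + j)]
    calc (us (k + j)).length = (us k).length := hconst j
      _ ≤ (us (k + j + 1)).length := (hconst (j + 1)).ge
  have hmap : ∀ j, us (k + j) = (us (k + j + 1)).map
      (fun a => (s (k + j) a).head (hf (k + j) a)) := by
    intro j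
    rw [hrec (k + j)]
    exact applyList_eq_map _ _ (hd j)
  have hlt : ∀ j i, i < (us k).length → i < (us (k + j)).length := fun j i hi => by
    rw [hconst j]; exact hi
  have hstab : ∀ (i : ℕ), i < (us k).length → ∀ (d : A),
      (us k).getD i d ∈ StabLet (fun n => s (n + k)) := by
    intro i hi d
    refine ⟨fun j => (us (k + j)).getD i d, rfl, ?_⟩
    intro j
    show s (j + k) ((us (k + j + 1)).getD i d) = [(us (k + j)).getD i d]
    have hi1 : i < (us (k + j + 1)).length := hlt (j + 1) i hi
    have hi0 : i < (us (k + j)).length := hlt j i hi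
    rw [List.getD_eq_getElem _ _ hi1, List.getD_eq_getElem _ _ hi0,
      Nat.add_comm j k, hd j _ (List.getElem_mem hi1)]
    simp only [hmap j, List.getElem_map]
  have helem : ∀ (i : ℕ), i < (us k).length → ∀ (d : A),
      compSeq s k ((us k).getD i d) ∈ StabFin s :=
    fun i hi d => compSeq_mem_stabFin s hf k (hstab i hi d)
  have hpos : 0 < (us k).length := List.length_pos_iff.mpr (hne k)
  have d : A := (us k).head (hne k)
  rcases Nat.lt_or_ge (us k).length 2 with hL | hL
  · -- length 1 : u = compSeq s k b with b a stable letter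
    have hb1 : (us k).length = 1 := by omega
    obtain ⟨b, hb⟩ := List.length_eq_one_iff.mp hb1
    refine ⟨k, b, ?_, ?_⟩
    · have := hstab 0 hpos d
      rw [hb] at this
      simpa using this
    · rw [← hus0, us_zero_eq s us hrec k, hb, applyList_singleton]
  · -- length ≥ 2 : contradiction with indecomposability
    exfalso
    apply hgen
    refine ⟨compSeq s k ((us k).head (hne k)), applyList (compSeq s k) (us k).tail,
      ?_, ?_, ?_⟩
    · have e : (us k).head (hne k) = (us k).getD 0 d := by
        rw [List.head_eq_getElem, List.getD_eq_getElem _ _ hpos]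
      rw [e]
      exact helem 0 hpos d
    · refine ⟨(us k).tail.map (compSeq s k), ?_, ?_, ?_⟩
      · have ht : 0 < (us k).tail.length := by
          rw [List.length_tail]; omega
        exact List.ne_nil_of_length_pos (by simpa using ht)
      · intro z hz
        obtain ⟨b, hb, rfl⟩ := List.mem_map.mp hz
        obtain ⟨j, hj, hjb⟩ := List.mem_iff_getElem.mp hb
        have hj1 : j + 1 < (us k).length := by
          rw [List.length_tail] at hj; omega
        have e : b = (us k).getD (j + 1) d := by
          rw [List.getD_eq_getElem _ _ hj1, ← List.getElem_tail (l := us k) (i := j)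
            (by rw [List.length_tail]; omega), hjb]
        rw [e]
        exact helem (j + 1) hj1 d
      · exact List.flatMap_def
    · rw [← hus0]
      conv_lhs => rw [us_zero_eq s us hrec k, ← List.cons_head_tail (hne k)]
      rw [applyList_cons]
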